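/- Let β₁, β₂, β₃ ∈ ℝ³ with ‖β₁‖ < 1, ‖β₂‖ < 1, ‖β₃‖ < 1, and suppose D is a real 3×3 matrix such that B(β₁) * B(β₂) = B(β₁ ⋆ β₂) * R(D) (the Thomas rotation of the pair (β₁, β₂)). Then associativity of relativistic velocity composition fails exactly by the Thomas rotation: β₁ ⋆ (β₂ ⋆ β₃) = (β₁ ⋆ β₂) ⋆ (D · β₃). -/

import Mathlib

open Matrix

noncomputable section

/-- Euclidean dot product on `ℝ³`. -/
def dot3 (u v : Fin 3 → ℝ) : ℝ := ∑ i, u i * v i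

/-- The Lorentz factor `γ(β) = 1/√(1 - ‖β‖²)`. -/
def gam (β : Fin 3 → ℝ) : ℝ := 1 / Real.sqrt (1 - dot3 β β)

/-- The Lorentz boost with velocity `β`, as a 4×4 matrix over `Unit ⊕ Fin 3`
(the `Unit` index is the time coordinate): time-time entry `γ`, time-space and
space-time entries `γ βᵢ`, space-space entries `δᵢⱼ + (γ²/(1+γ)) βᵢ βⱼ`. -/
def boost (β : Fin 3 → ℝ) : Matrix (Unit ⊕ Fin 3) (Unit ⊕ Fin 3) ℝ :=
  Matrix.fromBlocks (Matrix.of fun _ _ => gam β)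
    (Matrix.of fun _ j => gam β * β j)
    (Matrix.of fun i _ => gam β * β i)
    ((1 : Matrix (Fin 3) (Fin 3) ℝ) + ((gam β) ^ 2 / (1 + gam β)) • Matrix.vecMulVec β β)

/-- The spatial rotation `R(D) = diag(1, D)` as a 4×4 matrix. -/
def rot (D : Matrix (Fin 3) (Fin 3) ℝ) : Matrix (Unit ⊕ Fin 3) (Unit ⊕ Fin 3) ℝ :=
  Matrix.fromBlocks 1 0 0 D

/-- Relativistic composition of velocities:
`β₁ ⋆ β₂ = [β₁ + γ₁⁻¹ β₂ + (γ₁/(1+γ₁)) (β₁·β₂) β₁] / (1 + β₁·β₂)`. -/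
def vcomp (β₁ β₂ : Fin 3 → ℝ) : Fin 3 → ℝ :=
  (1 / (1 + dot3 β₁ β₂)) •
    (β₁ + (gam β₁)⁻¹ • β₂ + (gam β₁ / (1 + gam β₁)) • dot3 β₁ β₂ • β₁)

end

noncomputable section ThomasAux

/-- 4-vector with time component `c`, space part `c • v`. -/
def uvec (c : ℝ) (v : Fin 3 → ℝ) : Unit ⊕ Fin 3 → ℝ := Sum.elim (fun _ => c) (c • v)

lemma dot3_nonneg (u : Fin 3 → ℝ) : 0 ≤ dot3 u u :=
  Finset.sum_nonneg fun _ _ => mul_self_nonneg _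

lemma dot3_sq_le (u v : Fin 3 → ℝ) : dot3 u v ^ 2 ≤ dot3 u u * dot3 v v := by
  have := Finset.sum_mul_sq_le_sq_mul_sq Finset.univ u v
  simpa [dot3, sq] using this

lemma gam_pos {β : Fin 3 → ℝ} (h : dot3 β β < 1) : 0 < gam β :=
  div_pos one_pos (Real.sqrt_pos.2 (by linarith))

lemma gam_sq {β : Fin 3 → ℝ} (h : dot3 β β < 1) : gam β ^ 2 * (1 - dot3 β β) = 1 := by
  have h0 : (0:ℝ) < 1 - dot3 β β := by linarith
  rw [gam, div_pow, one_pow, Real.sq_sqrt h0.le, one_div, inv_mul_cancel₀ h0.ne']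

lemma one_add_dot_pos {u v : Fin 3 → ℝ} (hu : dot3 u u < 1) (hv : dot3 v v < 1) :
    0 < 1 + dot3 u v := by
  have h1 := dot3_sq_le u v
  have h2 := dot3_nonneg u
  have h3 := dot3_nonneg v
  nlinarith

lemma vcomp_eq (β v : Fin 3 → ℝ) :
    vcomp β v = ((1 + gam β / (1 + gam β) * dot3 β v) / (1 + dot3 β v)) • β
      + ((gam β)⁻¹ / (1 + dot3 β v)) • v := by
  funext i
  simp only [vcomp, Pi.smul_apply, Pi.add_apply, smul_eq_mul]
  ring

lemma dot3_expand (r s : ℝ) (u v : Fin 3 → ℝ) :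
    dot3 (r • u + s • v) (r • u + s • v)
      = r^2 * dot3 u u + 2*r*s*dot3 u v + s^2 * dot3 v v := by
  simp only [dot3, Fin.sum_univ_three, Pi.add_apply, Pi.smul_apply, smul_eq_mul]
  ring

lemma scalar_key (g a b c : ℝ) (hga : g^2*(1-a) = 1) (hg : 0 < g) (hb : 1 + b ≠ 0) :
    ((1 + g/(1+g)*b)/(1+b))^2 * a + 2*((1 + g/(1+g)*b)/(1+b))*(g⁻¹/(1+b))*b
      + (g⁻¹/(1+b))^2 * c = 1 - (1-a)*(1-c)/(1+b)^2 := by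
  have hg0 : g ≠ 0 := hg.ne'
  have hg1 : 1 + g ≠ 0 := by positivity
  have ha : a = (g^2 - 1)/g^2 := by field_simp; nlinarith [hga]
  rw [ha]
  field_simp
  ring

lemma dot3_vcomp_lt_one {β v : Fin 3 → ℝ} (hβ : dot3 β β < 1) (hv : dot3 v v < 1) :
    dot3 (vcomp β v) (vcomp β v) < 1 := by
  have hb := one_add_dot_pos hβ hv
  rw [vcomp_eq, dot3_expand,
    scalar_key (gam β) _ _ _ (gam_sq hβ) (gam_pos hβ) hb.ne']
  have : 0 < (1 - dot3 β β)*(1 - dot3 v v)/(1 + dot3 β v)^2 :=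
    div_pos (mul_pos (by linarith) (by linarith)) (pow_pos hb 2)
  linarith

open Matrix in
lemma time_comp (β : Fin 3 → ℝ) (c : ℝ) (v : Fin 3 → ℝ) :
    (boost β *ᵥ uvec c v) (Sum.inl ()) = c * gam β * (1 + dot3 β v) := by
  simp [boost, uvec, mulVec, dotProduct, Fintype.sum_sum_type, dot3, Fin.sum_univ_three]
  ring

lemma scalar_aux (g x y b c : ℝ) (hv : 1 + b ≠ 0) (hg : g ≠ 0) (hg1 : 1 + g ≠ 0) :
    g * x * c + (c * y + g ^ 2 / (1 + g) * x * b * c) =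
      c * g * (1 + b) * ((1 / (1 + b)) * (x + g⁻¹ * y + g / (1 + g) * (b * x))) := by
  field_simp
  ring

open Matrix in
lemma boost_uvec {β : Fin 3 → ℝ} (hg : 0 < gam β) {v : Fin 3 → ℝ}
    (hv : 1 + dot3 β v ≠ 0) (c : ℝ) :
    boost β *ᵥ uvec c v = uvec (c * gam β * (1 + dot3 β v)) (vcomp β v) := by
  have hg1 : (1 : ℝ) + gam β ≠ 0 := by positivity
  funext x
  cases x with
  | inl u => cases u; simpa [uvec] using time_comp β c v
  | inr i =>
    have hsum : ∑ j, ((1 : Matrix (Fin 3) (Fin 3) ℝ) +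
        (gam β ^ 2 / (1 + gam β)) • vecMulVec β β) i j * (c * v j)
        = c * v i + gam β ^ 2 / (1 + gam β) * β i * dot3 β v * c := by
      have : ∀ j, ((1 : Matrix (Fin 3) (Fin 3) ℝ) +
          (gam β ^ 2 / (1 + gam β)) • vecMulVec β β) i j * (c * v j)
          = (if i = j then c * v j else 0) +
            (gam β ^ 2 / (1 + gam β) * β i * c) * (β j * v j) := by
        intro j
        simp [Matrix.add_apply, Matrix.one_apply, vecMulVec_apply, add_mul, ite_mul]
        ring
      rw [Finset.sum_congr rfl fun j _ => this j, Finset.sum_add_distrib,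
        Finset.sum_ite_eq, ← Finset.mul_sum]
      simp [dot3]
      ring
    show (boost β *ᵥ uvec c v) (Sum.inr i) = _
    simp only [boost, uvec, mulVec, dotProduct, Fintype.sum_sum_type, Sum.elim_inl,
      Sum.elim_inr, fromBlocks_apply₂₁, fromBlocks_apply₂₂, of_apply,
      Finset.univ_unique, Finset.sum_const, Finset.card_singleton, one_smul,
      Pi.smul_apply, smul_eq_mul]
    rw [hsum]
    simp only [vcomp, Pi.smul_apply, Pi.add_apply, smul_eq_mul]
    exact scalar_aux (gam β) (β i) (v i) (dot3 β v) c hv hg.ne' hg1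

open Matrix in
lemma rot_uvec (D : Matrix (Fin 3) (Fin 3) ℝ) (v : Fin 3 → ℝ) :
    rot D *ᵥ uvec 1 v = uvec 1 (D *ᵥ v) := by
  funext x
  cases x with
  | inl u =>
    simp [rot, uvec, mulVec, dotProduct, Fintype.sum_sum_type, Matrix.one_apply]
  | inr i =>
    simp [rot, uvec, mulVec, dotProduct, Fintype.sum_sum_type]

end ThomasAux

open Matrix in
/-- Associativity of relativistic velocity composition fails exactly by the
Thomas rotation: `β₁ ⋆ (β₂ ⋆ β₃) = (β₁ ⋆ β₂) ⋆ (D · β₃)`. -/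
theorem vcomp_assoc_thomas (β₁ β₂ β₃ : Fin 3 → ℝ)
    (h₁ : dot3 β₁ β₁ < 1) (h₂ : dot3 β₂ β₂ < 1) (h₃ : dot3 β₃ β₃ < 1)
    (D : Matrix (Fin 3) (Fin 3) ℝ)
    (hD : boost β₁ * boost β₂ = boost (vcomp β₁ β₂) * rot D) :
    vcomp β₁ (vcomp β₂ β₃) = vcomp (vcomp β₁ β₂) (D *ᵥ β₃) := by
  -- abbreviations
  have hg1 := gam_pos h₁
  have hg2 := gam_pos h₂
  have hb23 : 0 < 1 + dot3 β₂ β₃ := one_add_dot_pos h₂ h₃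
  have hv23 : dot3 (vcomp β₂ β₃) (vcomp β₂ β₃) < 1 := dot3_vcomp_lt_one h₂ h₃
  have hb1 : 0 < 1 + dot3 β₁ (vcomp β₂ β₃) := one_add_dot_pos h₁ hv23
  have h12 : dot3 (vcomp β₁ β₂) (vcomp β₁ β₂) < 1 := dot3_vcomp_lt_one h₁ h₂
  have hg12 := gam_pos h12
  set c₂ : ℝ := 1 * gam β₂ * (1 + dot3 β₂ β₃) with hc₂
  set c₁₂ : ℝ := c₂ * gam β₁ * (1 + dot3 β₁ (vcomp β₂ β₃)) with hc₁₂
  have hc₂pos : 0 < c₂ := by rw [hc₂]; positivity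
  have hc₁₂pos : 0 < c₁₂ := by rw [hc₁₂]; positivity
  -- left side as a boosted 4-vector
  have hL : boost β₁ *ᵥ (boost β₂ *ᵥ uvec 1 β₃)
      = uvec c₁₂ (vcomp β₁ (vcomp β₂ β₃)) := by
    rw [boost_uvec hg2 hb23.ne' 1, boost_uvec hg1 hb1.ne' c₂]
  -- right side via the hypothesis hD
  have hR : boost β₁ *ᵥ (boost β₂ *ᵥ uvec 1 β₃)
      = boost (vcomp β₁ β₂) *ᵥ uvec 1 (D *ᵥ β₃) := by
    rw [mulVec_mulVec, hD, ← mulVec_mulVec, rot_uvec]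
  have heq : uvec c₁₂ (vcomp β₁ (vcomp β₂ β₃))
      = boost (vcomp β₁ β₂) *ᵥ uvec 1 (D *ᵥ β₃) := by rw [← hL, hR]
  -- the time component forces `1 + β₁₂ ⬝ Dβ₃ ≠ 0`
  have htime : c₁₂ = 1 * gam (vcomp β₁ β₂) * (1 + dot3 (vcomp β₁ β₂) (D *ᵥ β₃)) := by
    have := congrFun heq (Sum.inl ())
    rw [time_comp] at this
    simpa [uvec] using this
  have hbD : 1 + dot3 (vcomp β₁ β₂) (D *ᵥ β₃) ≠ 0 := by
    intro h
    rw [h] at htime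
    simp at htime
    nlinarith
  rw [boost_uvec hg12 hbD 1, ← htime] at heq
  funext i
  have := congrFun heq (Sum.inr i)
  simp only [uvec, Sum.elim_inr, Pi.smul_apply, smul_eq_mul] at this
  exact mul_left_cancel₀ hc₁₂pos.ne' this
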